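/- arXiv:0802.0837 — 4 statements merged into one kernel-verified Lean document; each statement's English description precedes it below -/
import Mathlib

section
/- Let M be a finite set, f, g : M → ℝ, and ≼ a total order on M with respect to which g is non-decreasing. For K ≥ 0, define m̂(K) as the ≼-smallest element of argmin_{m ∈ M} {f(m) + K g(m)}. Then the map K ↦ m̂(K) from [0, ∞) to M is non-increasing with respect to ≼. -/
/-- If `g` is non-decreasing for the (linear) ordering of `M` and, for each `K ≥ 0`,
`m̂ K` is the smallest minimizer of `f + K·g` over `M`, then `K ↦ m̂ K` is
non-increasing on `[0, ∞)`. -/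
theorem stmt2 {M : Type*} [Fintype M] [Nonempty M] [LinearOrder M]
    (f g : M → ℝ) (hg : Monotone g)
    (mhat : ℝ → M)
    (hmin : ∀ K : ℝ, 0 ≤ K → ∀ x : M, f (mhat K) + K * g (mhat K) ≤ f x + K * g x)
    (hsmallest : ∀ K : ℝ, 0 ≤ K → ∀ x : M,
      (∀ y : M, f x + K * g x ≤ f y + K * g y) → mhat K ≤ x) :
    ∀ K K' : ℝ, 0 ≤ K → K ≤ K' → mhat K' ≤ mhat K := by
  intro K K' hK hKK'
  set a := mhat K with ha
  set b := mhat K' with hb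
  by_contra h
  push_neg at h
  -- so a < b
  have hK' : (0:ℝ) ≤ K' := le_trans hK hKK'
  have hgab : g a ≤ g b := hg h.le
  -- a is a minimizer at K'
  have key : ∀ y : M, f a + K' * g a ≤ f y + K' * g y := by
    intro y
    have h1 : f a + K' * g a ≤ f b + K' * g b := by
      have h2 : f a + K * g a ≤ f b + K * g b := hmin K hK b
      nlinarith
    exact le_trans h1 (hmin K' hK' y)
  exact absurd (hsmallest K' hK' a key) (not_le.mpr h)
end

section
/- Let M be a finite set, f, g : M → ℝ, and ≼ a total order on M making g non-decreasing. Define m̂(K) as the ≼-smallest minimizer of f + K·g. Then there exist an integer i_max with 0 ≤ i_max ≤ card(M) − 1, an increasing sequence 0 = K₀ < K₁ < ... < K_{i_max} < K_{i_max+1} = +∞, and models m₀ ≻ m₁ ≻ ... ≻ m_{i_max} such that for every i and every K ∈ [K_i, K_{i+1}), m̂(K) = m_i. In other words, K ↦ m̂(K) is piecewise constant with at most card(M) − 1 jumps. -/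
/-- The trajectory `K ↦ m̂(K)` (smallest minimizer of `f + K·g` for the linear order,
`g` non-decreasing) is piecewise constant: there exist `i_max ≤ card M − 1`, jump
locations `0 = K₀ < K₁ < ⋯ < K_{i_max}` (with `K_{i_max+1} = +∞`, i.e. the last
interval is `[K_{i_max}, ∞)`) and strictly decreasing models `m₀ ≻ m₁ ≻ ⋯ ≻ m_{i_max}`
such that `m̂(K) = m_i` on `[K_i, K_{i+1})`. -/
theorem stmt3 {M : Type*} [Fintype M] [Nonempty M] [LinearOrder M]
    (f g : M → ℝ) (hg : Monotone g)
    (mhat : ℝ → M)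
    (hmin : ∀ K : ℝ, 0 ≤ K → ∀ x : M, f (mhat K) + K * g (mhat K) ≤ f x + K * g x)
    (hsmallest : ∀ K : ℝ, 0 ≤ K → ∀ x : M,
      (∀ y : M, f x + K * g x ≤ f y + K * g y) → mhat K ≤ x) :
    ∃ imax : ℕ, imax ≤ Fintype.card M - 1 ∧
    ∃ Kseq : ℕ → ℝ, ∃ mseq : ℕ → M,
      Kseq 0 = 0 ∧
      (∀ i < imax, Kseq i < Kseq (i + 1)) ∧
      (∀ i < imax, mseq (i + 1) < mseq i) ∧
      (∀ i ≤ imax, ∀ K : ℝ, Kseq i ≤ K → (i < imax → K < Kseq (i + 1)) →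
        mhat K = mseq i) := by
  classical
  -- L1 : mhat is antitone on [0, ∞)
  have L1 : ∀ K1 K2 : ℝ, 0 ≤ K1 → K1 ≤ K2 → mhat K2 ≤ mhat K1 := by
    intro K1 K2 h0 h12
    rcases eq_or_lt_of_le h12 with rfl | hlt
    · exact le_rfl
    · have h0' : (0:ℝ) ≤ K2 := le_trans h0 h12
      have hA := hmin K1 h0 (mhat K2)
      have hB := hmin K2 h0' (mhat K1)
      have hgle : g (mhat K2) ≤ g (mhat K1) := by nlinarith
      rcases lt_or_eq_of_le hgle with hglt | hgeq
      · -- strict: monotonicity of g forces mhat K2 < mhat K1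
        by_contra hc
        push_neg at hc
        exact absurd (hg hc.le) (not_le.2 hglt)
      · -- equal g values: mhat K1 is also a minimizer at K2
        have hf : f (mhat K1) ≤ f (mhat K2) := by nlinarith
        refine hsmallest K2 h0' (mhat K1) ?_
        intro y
        calc f (mhat K1) + K2 * g (mhat K1)
            ≤ f (mhat K2) + K2 * g (mhat K2) := by nlinarith
          _ ≤ f y + K2 * g y := hmin K2 h0' y
  -- key : if the value changes after a, there is a first change point b,
  -- with mhat constant on [a,b) and mhat b < mhat a
  have key : ∀ a : ℝ, 0 ≤ a → {K | a ≤ K ∧ mhat K ≠ mhat a}.Nonempty →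
      ∃ b : ℝ, a < b ∧ mhat b < mhat a ∧ ∀ K, a ≤ K → K < b → mhat K = mhat a := by
    intro a ha hU
    set U : Set ℝ := {K | a ≤ K ∧ mhat K ≠ mhat a} with hUdef
    have hbdd : BddBelow U := ⟨a, fun x hx => hx.1⟩
    set b := sInf U with hbdef
    have hab : a ≤ b := le_csInf hU fun x hx => hx.1
    have hb0 : (0:ℝ) ≤ b := ha.trans hab
    have hconst : ∀ K, a ≤ K → K < b → mhat K = mhat a := by
      intro K hK hKb
      by_contra hne
      exact absurd (csInf_le hbdd ⟨hK, hne⟩) (not_le.2 hKb)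
    -- everything strictly beyond b is in U
    have hup : ∀ K, b < K → mhat K ≠ mhat a ∧ mhat K ≤ mhat a := by
      intro K hK
      obtain ⟨K', hK'U, hK'K⟩ := (csInf_lt_iff hbdd hU).1 hK
      have hK'0 : (0:ℝ) ≤ K' := ha.trans hK'U.1
      have h1 : mhat K ≤ mhat K' := L1 K' K hK'0 hK'K.le
      have h2 : mhat K' ≤ mhat a := L1 a K' ha hK'U.1
      have h3 : mhat K' < mhat a := lt_of_le_of_ne h2 hK'U.2
      exact ⟨ne_of_lt (lt_of_le_of_lt h1 h3), h1.trans h2⟩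
    -- b itself is a change point
    have hbne : mhat b ≠ mhat a := by
      intro hmb
      set φ : ℕ → M := fun n => mhat (b + 1 / (n + 1)) with hφ
      obtain ⟨m', hm'⟩ := Finite.exists_infinite_fiber φ
      have hfib : (φ ⁻¹' {m'}).Infinite := Set.infinite_coe_iff.1 hm'
      have hlt : ∀ n : ℕ, φ n < mhat a := by
        intro n
        have hpos : (0:ℝ) < 1 / ((n:ℝ) + 1) := by positivity
        have := hup (b + 1 / (n + 1)) (by linarith)
        exact lt_of_le_of_ne this.2 this.1
      have hm'lt : m' < mhat a := by
        obtain ⟨n, hn, -⟩ := hfib.exists_gt 0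
        have : φ n = m' := hn
        rw [← this]; exact hlt n
      -- m' is a minimizer at b
      have hstep : ∀ n : ℕ, φ n = m' →
          f m' + (b + 1 / (n + 1)) * g m' ≤ f (mhat a) + (b + 1 / (n + 1)) * g (mhat a) := by
        intro n hn
        have hpos : (0:ℝ) < 1 / ((n:ℝ) + 1) := by positivity
        have h := hmin (b + 1 / (n + 1)) (by linarith) (mhat a)
        rw [show mhat (b + 1 / (n+1)) = φ n from rfl, hn] at h
        exact h
      have hclaim : f m' + b * g m' ≤ f (mhat a) + b * g (mhat a) := by
        by_contra hcon
        push_neg at hcon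
        set D : ℝ := f m' + b * g m' - (f (mhat a) + b * g (mhat a)) with hD
        have hDpos : 0 < D := by simp only [hD]; linarith
        set C : ℝ := |g (mhat a)| + |g m'| + 1 with hC
        have hCpos : 0 < C := by positivity
        obtain ⟨N, hN⟩ := exists_nat_gt (C / D)
        obtain ⟨n, hn, hNn⟩ := hfib.exists_gt N
        have hn' : φ n = m' := hn
        have hineq := hstep n hn'
        have hpos : (0:ℝ) < 1 / ((n:ℝ) + 1) := by positivity
        have hnn : (N:ℝ) < (n:ℝ) + 1 := by exact_mod_cast Nat.lt_succ_of_lt hNn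
        have hCD : C / D < (n:ℝ) + 1 := lt_trans hN hnn
        have htC : (1 / ((n:ℝ) + 1)) * C < D := by
          have h1 : (0:ℝ) < (n:ℝ) + 1 := by positivity
          rw [div_lt_iff₀ hDpos] at hCD
          rw [one_div, inv_mul_eq_div, div_lt_iff₀ h1]
          nlinarith
        have habs1 : g (mhat a) ≤ |g (mhat a)| := le_abs_self _
        have habs2 : -|g m'| ≤ g m' := neg_abs_le _
        nlinarith [hpos]
      have hminb : ∀ y : M, f m' + b * g m' ≤ f y + b * g y := by
        intro y
        have := hmin b hb0 y
        rw [hmb] at this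
        linarith
      have := hsmallest b hb0 m' hminb
      rw [hmb] at this
      exact absurd hm'lt (not_lt.2 this)
    have haneb : a ≠ b := by
      intro h; exact hbne (by rw [h])
    have halt : a < b := lt_of_le_of_ne hab haneb
    exact ⟨b, halt, lt_of_le_of_ne (L1 a b ha hab) hbne, hconst⟩
  -- main induction
  have aux : ∀ n : ℕ, ∀ a : ℝ, 0 ≤ a →
      (Finset.univ.filter (fun m => m ≤ mhat a)).card ≤ n →
      ∃ imax : ℕ, ∃ Kseq : ℕ → ℝ, ∃ mseq : ℕ → M,
        imax + 1 ≤ (Finset.univ.filter (fun m => m ≤ mhat a)).card ∧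
        Kseq 0 = a ∧ mseq 0 = mhat a ∧
        (∀ i < imax, Kseq i < Kseq (i + 1)) ∧
        (∀ i < imax, mseq (i + 1) < mseq i) ∧
        (∀ i ≤ imax, ∀ K : ℝ, Kseq i ≤ K → (i < imax → K < Kseq (i + 1)) →
          mhat K = mseq i) := by
    intro n
    induction n with
    | zero =>
      intro a ha hcard
      exfalso
      have hmem : mhat a ∈ Finset.univ.filter (fun m => m ≤ mhat a) := by
        simp
      have := Finset.card_pos.2 ⟨mhat a, hmem⟩
      omega
    | succ n ih =>
      intro a ha hcard
      by_cases hU : {K | a ≤ K ∧ mhat K ≠ mhat a}.Nonempty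
      · obtain ⟨b, hab, hmba, hconst⟩ := key a ha hU
        have hb0 : (0:ℝ) ≤ b := ha.trans hab.le
        have hsub : (Finset.univ.filter (fun m => m ≤ mhat b)) ⊂
            (Finset.univ.filter (fun m => m ≤ mhat a)) := by
          constructor
          · intro x hx
            simp only [Finset.mem_filter, Finset.mem_univ, true_and] at hx ⊢
            exact hx.trans hmba.le
          · intro hsup
            have := hsup (by simp : mhat a ∈ Finset.univ.filter (fun m => m ≤ mhat a))
            simp only [Finset.mem_filter, Finset.mem_univ, true_and] at this
            exact absurd this (not_le.2 hmba)
        have hcard' := Finset.card_lt_card hsub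
        obtain ⟨imax', K', m', hc', hK0, hm0, hKinc, hmdec, hint⟩ :=
          ih b hb0 (by omega)
        refine ⟨imax' + 1, fun i => Nat.casesOn i a K', fun i => Nat.casesOn i (mhat a) m',
          by omega, rfl, rfl, ?_, ?_, ?_⟩
        · intro i hi
          cases i with
          | zero => show a < K' 0; rw [hK0]; exact hab
          | succ j => exact hKinc j (by omega)
        · intro i hi
          cases i with
          | zero => show m' 0 < mhat a; rw [hm0]; exact hmba
          | succ j => exact hmdec j (by omega)
        · intro i hi K hK hKlt
          cases i with
          | zero =>
            have hKb : K < K' 0 := hKlt (by omega)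
            rw [hK0] at hKb
            exact hconst K hK hKb
          | succ j =>
            exact hint j (by omega) K hK (fun hj => hKlt (by omega))
      · refine ⟨0, fun _ => a, fun _ => mhat a, ?_, rfl, rfl, by omega, by omega, ?_⟩
        · have hmem : mhat a ∈ Finset.univ.filter (fun m => m ≤ mhat a) := by simp
          have := Finset.card_pos.2 ⟨mhat a, hmem⟩
          omega
        · intro i hi K hK _
          by_contra hne
          exact hU ⟨K, hK, hne⟩
  obtain ⟨imax, Kseq, mseq, hc, hK0, hm0, hKinc, hmdec, hint⟩ :=
    aux (Fintype.card M) 0 le_rfl (by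
      calc (Finset.univ.filter (fun m => m ≤ mhat 0)).card
          ≤ Finset.univ.card := Finset.card_filter_le _ _
        _ = Fintype.card M := Finset.card_univ)
  refine ⟨imax, ?_, Kseq, mseq, hK0, hKinc, hmdec, hint⟩
  have hle : (Finset.univ.filter (fun m => m ≤ mhat 0)).card ≤ Fintype.card M := by
    calc (Finset.univ.filter (fun m => m ≤ mhat 0)).card
        ≤ Finset.univ.card := Finset.card_filter_le _ _
      _ = Fintype.card M := Finset.card_univ
  omega
end

section
/- Let (p_λ)_{λ ∈ Λ} be nonnegative reals summing to 1 with card(Λ) ≤ n, and let (n p̂_λ)_{λ ∈ Λ} be a multinomial random vector with parameters (n; (p_λ)_λ). Then for every γ > 0, with probability at least 1 − 2 n^{−γ}, one has min_λ {n p̂_λ} ≥ (min_λ {n p_λ})/2 − 2(γ+1) ln(n). -/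
open MeasureTheory ProbabilityTheory Finset Classical

noncomputable section

lemma aux_integrable_of_bdd {Ω : Type*} [MeasureSpace Ω] [IsFiniteMeasure (ℙ : Measure Ω)]
    {f : Ω → ℝ} (hf : Measurable f) (C : ℝ) (h : ∀ ω, |f ω| ≤ C) : Integrable f ℙ :=
  (integrable_const C).mono' hf.aestronglyMeasurable (ae_of_all _ h)

lemma aux_mgf_indicator {Ω Λ : Type*} [MeasureSpace Ω] [IsProbabilityMeasure (ℙ : Measure Ω)]
    [MeasurableSpace Λ] [MeasurableSingletonClass Λ] (X : Ω → Λ) (hX : Measurable X)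
    (l : Λ) (s : ℝ) :
    mgf (fun ω => if X ω = l then (1:ℝ) else 0) ℙ s =
      (Real.exp s - 1) * (ℙ {ω | X ω = l}).toReal + 1 := by
  have hA : MeasurableSet {ω | X ω = l} := hX (measurableSet_singleton l)
  have heq : (fun ω => Real.exp (s * (if X ω = l then (1:ℝ) else 0))) =
      fun ω => ({ω | X ω = l}).indicator (fun _ => Real.exp s - 1) ω + 1 := by
    funext ω; by_cases h : X ω = l <;> simp [Set.indicator, h]
  rw [mgf, heq, integral_add ((integrable_const _).indicator hA) (integrable_const 1),
    integral_indicator_const _ hA, integral_const]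
  simp [mul_comm]
  exact Or.inl rfl

/-- Multinomial lower deviations: if `(n p̂_λ)_λ` are the cell counts of `n` i.i.d.
categorical draws with probabilities `(p_λ)_λ`, `card Λ ≤ n`, then for every `γ > 0`,
with probability at least `1 − 2 n^{−γ}`,
`min_λ (n p̂_λ) ≥ (min_λ n p_λ)/2 − 2(γ+1) ln n`. -/
theorem stmt9 {Ω Λ : Type*} [MeasureSpace Ω] [IsProbabilityMeasure (ℙ : Measure Ω)]
    [Fintype Λ] [Nonempty Λ] [MeasurableSpace Λ] [MeasurableSingletonClass Λ]
    (n : ℕ) (hn : 0 < n) (hcard : Fintype.card Λ ≤ n)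
    (p : Λ → ℝ) (hp : ∀ l, 0 ≤ p l) (hsum : ∑ l, p l = 1)
    (Xi : Fin n → Ω → Λ) (hmeas : ∀ i, Measurable (Xi i))
    (hindep : iIndepFun Xi ℙ)
    (hlaw : ∀ i l, (ℙ {ω | Xi i ω = l}).toReal = p l)
    (γ : ℝ) (hγ : 0 < γ) :
    1 - 2 * (n : ℝ) ^ (-γ) ≤
      (ℙ {ω | univ.inf' univ_nonempty
            (fun l => ((univ.filter fun i => Xi i ω = l).card : ℝ)) ≥
          univ.inf' univ_nonempty (fun l => n * p l) / 2 -
            2 * (γ + 1) * Real.log n}).toReal := by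
  classical
  have hn1 : (1:ℝ) ≤ n := by exact_mod_cast hn
  have hnpos : (0:ℝ) < n := by linarith
  have hlogn : 0 ≤ Real.log n := Real.log_nonneg hn1
  set T : ℝ := 2 * (γ + 1) * Real.log n with hTdef
  have hTnn : 0 ≤ T := by positivity
  set c : ℝ := univ.inf' univ_nonempty (fun l => (n:ℝ) * p l) / 2 - T with hcdef
  -- the count variables
  set S : Λ → Ω → ℝ := fun l ω => ∑ i, (if Xi i ω = l then (1:ℝ) else 0) with hSdef
  have hScard : ∀ l ω, ((univ.filter fun i => Xi i ω = l).card : ℝ) = S l ω := by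
    intro l ω
    rw [Finset.card_filter]
    push_cast
    rfl
  have hYmeas : ∀ (l : Λ) (i : Fin n),
      Measurable (fun ω => if Xi i ω = l then (1:ℝ) else 0) := by
    intro l i
    exact (measurable_of_countable (fun x : Λ => if x = l then (1:ℝ) else 0)).comp (hmeas i)
  have hSmeas : ∀ l, Measurable (S l) := by
    intro l
    exact Finset.measurable_sum univ fun i _ => hYmeas l i
  have hSnn : ∀ l ω, 0 ≤ S l ω := by
    intro l ω
    exact Finset.sum_nonneg fun i _ => by positivity
  have hple : ∀ l, p l ≤ 1 := by
    intro l
    rw [← hsum]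
    exact Finset.single_le_sum (fun i _ => hp i) (mem_univ l)
  -- per-category Chernoff bound
  have key : ∀ l, (ℙ {ω | S l ω < c}).toReal ≤ (n:ℝ) ^ (-(γ+1)) := by
    intro l
    have hrnn : (0:ℝ) ≤ (n:ℝ) ^ (-(γ+1)) := Real.rpow_nonneg hnpos.le _
    have hc_le : c ≤ (n:ℝ) * p l / 2 - T := by
      have h1 : univ.inf' univ_nonempty (fun l => (n:ℝ) * p l) ≤ (n:ℝ) * p l :=
        Finset.inf'_le _ (mem_univ l)
      rw [hcdef]; linarith
    set ε : ℝ := (n:ℝ) * p l / 2 - T with hεdef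
    by_cases hneg : ε < 0
    · have hempty : {ω | S l ω < c} = ∅ := by
        ext ω
        simp only [Set.mem_setOf_eq, Set.mem_empty_iff_false, iff_false, not_lt]
        have := hSnn l ω
        linarith
      rw [hempty]
      simpa using hrnn
    · push_neg at hneg
      set t : ℝ := -Real.log 2 with htdef
      have ht : t ≤ 0 := by
        simp only [htdef, neg_nonpos]
        exact Real.log_nonneg (by norm_num)
      have hintY : ∀ i : Fin n,
          Integrable (fun ω => Real.exp (t * (if Xi i ω = l then (1:ℝ) else 0))) ℙ := by
        intro i
        refine aux_integrable_of_bdd (by fun_prop) (Real.exp |t|) fun ω => ?_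
        rw [abs_of_pos (Real.exp_pos _)]
        apply Real.exp_le_exp.2
        by_cases h : Xi i ω = l
        · simpa [h] using le_abs_self t
        · simpa [h] using abs_nonneg t
      have hSsum : S l = ∑ i : Fin n, (fun ω => if Xi i ω = l then (1:ℝ) else 0) := by
        funext ω; rw [hSdef]; simp
      have hindepY : iIndepFun
          (fun i ω => if Xi i ω = l then (1:ℝ) else 0) ℙ :=
        hindep.comp (fun _ x => if x = l then (1:ℝ) else 0)
          (fun _ => measurable_of_countable _)
      have hintS : Integrable (fun ω => Real.exp (t * S l ω)) ℙ := by
        refine aux_integrable_of_bdd (by fun_prop) (Real.exp (|t| * n)) fun ω => ?_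
        rw [abs_of_pos (Real.exp_pos _)]
        apply Real.exp_le_exp.2
        have hSle : S l ω ≤ n := by
          rw [hSdef]
          calc ∑ i : Fin n, (if Xi i ω = l then (1:ℝ) else 0) ≤ ∑ _i : Fin n, (1:ℝ) := by
                apply Finset.sum_le_sum; intro i _; split <;> norm_num
            _ = n := by simp
        calc t * S l ω ≤ |t| * S l ω := mul_le_mul_of_nonneg_right (le_abs_self t) (hSnn l ω)
          _ ≤ |t| * n := mul_le_mul_of_nonneg_left hSle (abs_nonneg t)
      have chern := measure_le_le_exp_mul_mgf (X := S l) (μ := ℙ) (t := t) ε ht hintS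
      have hmgfS : mgf (S l) ℙ t = (1 - p l / 2) ^ n := by
        rw [hSsum, hindepY.mgf_sum (fun i => hYmeas l i) univ]
        have : ∀ i : Fin n, mgf (fun ω => if Xi i ω = l then (1:ℝ) else 0) ℙ t
            = 1 - p l / 2 := by
          intro i
          rw [aux_mgf_indicator (Xi i) (hmeas i) l t, hlaw i l, htdef, Real.exp_neg,
            Real.exp_log (by norm_num)]
          ring
        rw [Finset.prod_congr rfl fun i _ => this i]
        simp
      have hbound : (ℙ {ω | S l ω ≤ ε}).toReal ≤ (n:ℝ) ^ (-(γ+1)) := by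
        refine chern.trans ?_
        rw [hmgfS]
        have h1 : (1 - p l / 2 : ℝ) ^ n ≤ Real.exp (-(p l / 2)) ^ n := by
          apply pow_le_pow_left₀ (by nlinarith [hple l, hp l])
          linarith [Real.add_one_le_exp (-(p l / 2))]
        have h2 : Real.exp (-t * ε) * (1 - p l / 2) ^ n
            ≤ Real.exp (-t * ε) * Real.exp (-(p l / 2)) ^ n :=
          mul_le_mul_of_nonneg_left h1 (Real.exp_pos _).le
        refine h2.trans ?_
        rw [← Real.exp_nat_mul, ← Real.exp_add]
        have h3 : -t * ε + n * -(p l / 2) ≤ -T := by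
          have hlog2 : Real.log 2 ≤ 1 := by
            have := Real.log_le_sub_one_of_pos (by norm_num : (0:ℝ) < 2)
            linarith
          have h4 : -t * ε ≤ ε := by
            rw [htdef, neg_neg]
            nlinarith [Real.log_nonneg (by norm_num : (1:ℝ) ≤ 2)]
          rw [hεdef] at h4 ⊢
          linarith
        calc Real.exp (-t * ε + n * -(p l / 2)) ≤ Real.exp (-T) := Real.exp_le_exp.2 h3
          _ = (n:ℝ) ^ (-(2*(γ+1))) := by
              rw [Real.rpow_def_of_pos hnpos, hTdef]
              congr 1; ring
          _ ≤ (n:ℝ) ^ (-(γ+1)) := Real.rpow_le_rpow_of_exponent_le hn1 (by linarith)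
      refine le_trans ?_ hbound
      apply ENNReal.toReal_mono (measure_ne_top _ _)
      apply measure_mono
      intro ω hω
      simp only [Set.mem_setOf_eq] at hω ⊢
      linarith [hc_le]
  -- rewrite the event
  have hEset : {ω | univ.inf' univ_nonempty
        (fun l => ((univ.filter fun i => Xi i ω = l).card : ℝ)) ≥ c} =
      ⋂ l, {ω | c ≤ S l ω} := by
    ext ω
    simp only [Set.mem_setOf_eq, Set.mem_iInter, ge_iff_le, Finset.le_inf'_iff]
    constructor
    · intro h l
      rw [← hScard]
      exact h l (mem_univ l)
    · intro h l _
      rw [hScard]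
      exact h l
  have hEmeas : MeasurableSet (⋂ l, {ω | c ≤ S l ω}) :=
    MeasurableSet.iInter fun l => measurableSet_le measurable_const (hSmeas l)
  have hcompl : (⋂ l, {ω | c ≤ S l ω})ᶜ = ⋃ l, {ω | S l ω < c} := by
    simp [Set.compl_iInter, Set.compl_setOf, not_le]
  have hUB : (ℙ ((⋂ l, {ω | c ≤ S l ω})ᶜ)).toReal ≤ (n:ℝ) ^ (-γ) := by
    rw [hcompl]
    have h1 : ℙ (⋃ l, {ω | S l ω < c}) ≤ ∑ l, ℙ {ω | S l ω < c} :=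
      (measure_iUnion_le _).trans_eq (tsum_fintype _)
    have h2 : (ℙ (⋃ l, {ω | S l ω < c})).toReal ≤ ∑ l, (ℙ {ω | S l ω < c}).toReal := by
      rw [← ENNReal.toReal_sum fun l _ => measure_ne_top _ _]
      exact ENNReal.toReal_mono
        (ENNReal.sum_ne_top.2 fun l _ => measure_ne_top _ _) h1
    refine h2.trans ?_
    calc ∑ l, (ℙ {ω | S l ω < c}).toReal ≤ ∑ _l : Λ, (n:ℝ) ^ (-(γ+1)) :=
          Finset.sum_le_sum fun l _ => key l
      _ = (Fintype.card Λ : ℝ) * (n:ℝ) ^ (-(γ+1)) := by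
          rw [Finset.sum_const, nsmul_eq_mul, Finset.card_univ]
      _ ≤ (n:ℝ) * (n:ℝ) ^ (-(γ+1)) :=
          mul_le_mul_of_nonneg_right (by exact_mod_cast hcard)
            (Real.rpow_nonneg hnpos.le _)
      _ = (n:ℝ) ^ (1:ℝ) * (n:ℝ) ^ (-(γ+1)) := by rw [Real.rpow_one]
      _ = (n:ℝ) ^ ((1:ℝ) + -(γ+1)) := (Real.rpow_add hnpos _ _).symm
      _ = (n:ℝ) ^ (-γ) := by congr 1; ring
  rw [hEset]
  have hadd := prob_add_prob_compl (μ := ℙ) hEmeas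
  have hsplit : (ℙ (⋂ l, {ω | c ≤ S l ω})).toReal +
      (ℙ ((⋂ l, {ω | c ≤ S l ω})ᶜ)).toReal = 1 := by
    rw [← ENNReal.toReal_add (measure_ne_top _ _) (measure_ne_top _ _), hadd]
    simp
  have hrnn : 0 ≤ (n:ℝ) ^ (-γ) := Real.rpow_nonneg hnpos.le _
  linarith
end
end

section
/- Let (n p̂_λ)_{λ∈Λ_m} be the cell counts of n i.i.d. points in a finite partition with probabilities (p_λ), and suppose D_m · min_λ p_λ ≥ c > 0 where D_m = card(Λ_m). If D_m ≤ c' n / ln(n) for a suitable constant c' depending only on c and γ, then with probability at least 1 − 2n^{−γ}, every cell contains at least one sample point, i.e., min_λ {n p̂_λ} ≥ 1. -/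
open MeasureTheory ProbabilityTheory Finset Classical

noncomputable section

/-- If the partition is lower-regular (`D_m · min_λ p_λ ≥ c > 0`), then there is a
constant `c' > 0` depending only on `c` and `γ` such that whenever
`D_m ≤ c'·n/ln n`, with probability at least `1 − 2 n^{−γ}` every cell of the
partition contains at least one of the `n` i.i.d. sample points. -/
theorem stmt19 (c γ : ℝ) (hc : 0 < c) (hγ : 0 < γ) :
    ∃ c' : ℝ, 0 < c' ∧
      ∀ (Ω Λ : Type) (_ : MeasureSpace Ω),
        IsProbabilityMeasure (ℙ : Measure Ω) →
        ∀ (_ : Fintype Λ) (_ : Nonempty Λ) (_ : MeasurableSpace Λ),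
        MeasurableSingletonClass Λ →
        ∀ (n : ℕ), 2 ≤ n →
        ∀ (p : Λ → ℝ), (∀ l, 0 ≤ p l) → (∑ l, p l) = 1 →
        Fintype.card Λ ≤ n →
        ∀ (Xi : Fin n → Ω → Λ), (∀ i, Measurable (Xi i)) →
        iIndepFun Xi ℙ →
        (∀ i l, (ℙ {ω | Xi i ω = l}).toReal = p l) →
        (c ≤ (Fintype.card Λ : ℝ) * ⨅ l, p l) →
        ((Fintype.card Λ : ℝ) ≤ c' * n / Real.log n) →
        1 - 2 * (n : ℝ) ^ (-γ) ≤
          (ℙ {ω | ∀ l, 1 ≤ (univ.filter fun i => Xi i ω = l).card}).toReal := by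
  refine ⟨c / (γ + 1), div_pos hc (by linarith), ?_⟩
  intro Ω Λ _ hprob _ _ _ _ n hn p hp0 hpsum hcard Xi hXm hXind hXp hreg hDm
  set D : ℕ := Fintype.card Λ with hD
  have hD0 : 0 < D := Fintype.card_pos
  have hDR : (0:ℝ) < D := by exact_mod_cast hD0
  have hn0 : (0:ℝ) < n := by positivity
  have hn1 : (1:ℝ) < n := by exact_mod_cast hn
  have hlog : 0 < Real.log n := Real.log_pos hn1
  -- each p l is at least c / D
  have hinf : ∀ l, c / D ≤ p l := by
    intro l
    have h1 : c / D ≤ ⨅ l, p l := by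
      rw [div_le_iff₀ hDR] at *
      linarith [hreg, mul_comm (⨅ l, p l) (D:ℝ)]
    exact h1.trans (ciInf_le (Set.Finite.bddBelow (Set.finite_range p)) l)
  have hp1 : ∀ l, p l ≤ 1 := by
    intro l
    rw [← hpsum]
    exact Finset.single_le_sum (fun i _ => hp0 i) (mem_univ l)
  have hcD1 : c / D ≤ 1 := (hinf (Classical.arbitrary Λ)).trans (hp1 _)
  -- the bad events
  set A : Λ → Set Ω := fun l => ⋂ i, Xi i ⁻¹' {l}ᶜ with hA
  have hAm : ∀ l, MeasurableSet (A l) := fun l =>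
    MeasurableSet.iInter fun i => (hXm i) (measurableSet_singleton l).compl
  -- probability of a single bad event
  have hAprob : ∀ l, (ℙ (A l)).toReal = (1 - p l) ^ n := by
    intro l
    have := hXind.meas_iInter (s := fun i => Xi i ⁻¹' {l}ᶜ)
      (fun i => ⟨{l}ᶜ, (measurableSet_singleton l).compl, rfl⟩)
    rw [hA]
    rw [this, ENNReal.toReal_prod]
    have : ∀ i : Fin n, (ℙ (Xi i ⁻¹' {l}ᶜ)).toReal = 1 - p l := by
      intro i
      have hm : MeasurableSet {ω | Xi i ω = l} := (hXm i) (measurableSet_singleton l)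
      have hcompl : Xi i ⁻¹' {l}ᶜ = {ω | Xi i ω = l}ᶜ := rfl
      rw [hcompl, prob_compl_eq_one_sub hm,
        ENNReal.toReal_sub_of_le prob_le_one (by simp), ENNReal.toReal_one, hXp i l]
    rw [Finset.prod_congr rfl (fun i _ => this i)]
    simp [Finset.prod_const]
  -- union bound
  have hunion : (ℙ (⋃ l, A l)).toReal ≤ (n:ℝ) ^ (-γ) := by
    have h1 : ℙ (⋃ l, A l) ≤ ∑ l, ℙ (A l) := measure_iUnion_fintype_le _ _
    have h2 : (ℙ (⋃ l, A l)).toReal ≤ ∑ l, (ℙ (A l)).toReal := by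
      rw [← ENNReal.toReal_sum (fun l _ => measure_ne_top _ _)]
      exact ENNReal.toReal_mono (by exact ENNReal.sum_ne_top.2 fun l _ => measure_ne_top _ _) h1
    refine h2.trans ?_
    have h3 : ∀ l, (ℙ (A l)).toReal ≤ (1 - c / D) ^ n := by
      intro l
      rw [hAprob l]
      exact pow_le_pow_left₀ (by linarith [hp1 l]) (by linarith [hinf l]) n
    have h4 : (∑ l, (ℙ (A l)).toReal) ≤ (D:ℝ) * (1 - c / D) ^ n := by
      calc (∑ l, (ℙ (A l)).toReal) ≤ ∑ _l : Λ, (1 - c / D) ^ n :=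
            Finset.sum_le_sum fun l _ => h3 l
        _ = (D:ℝ) * (1 - c / D) ^ n := by
            rw [Finset.sum_const, nsmul_eq_mul]; rfl
    refine h4.trans ?_
    have h5 : (1 - c / D) ^ n ≤ Real.exp (-(c / D)) ^ n :=
      pow_le_pow_left₀ (by linarith) (by linarith [Real.add_one_le_exp (-(c/D))]) n
    have h6 : Real.exp (-(c / D)) ^ n = Real.exp (-(c * n / D)) := by
      rw [← Real.exp_nat_mul]
      ring_nf
    have h7 : (γ + 1) * Real.log n ≤ c * n / D := by
      rw [le_div_iff₀ hDR]
      rw [le_div_iff₀ hlog] at hDm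
      calc (γ + 1) * Real.log n * D = (γ+1) * ((D:ℝ) * Real.log n) := by ring
        _ ≤ (γ+1) * (c / (γ+1) * n) := by
            exact mul_le_mul_of_nonneg_left hDm (by linarith)
        _ = c * n := by field_simp
    have h8 : Real.exp (-(c * n / D)) ≤ Real.exp (-((γ + 1) * Real.log n)) :=
      Real.exp_le_exp.2 (by linarith)
    have h9 : Real.exp (-((γ + 1) * Real.log n)) = (n:ℝ) ^ (-(γ+1)) := by
      rw [Real.rpow_def_of_pos hn0]
      ring_nf
    have h10 : (D:ℝ) * (1 - c/D) ^ n ≤ (n:ℝ) * (n:ℝ) ^ (-(γ+1)) := by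
      have hDn : (D:ℝ) ≤ n := by exact_mod_cast hcard
      have := (h5.trans (h6.le.trans (h8.trans h9.le)))
      have hnn : 0 ≤ (1 - c/D)^n := pow_nonneg (by linarith) n
      exact mul_le_mul hDn this hnn hn0.le
    refine h10.trans ?_
    have : (n:ℝ) * (n:ℝ) ^ (-(γ+1)) = (n:ℝ) ^ (-γ) := by
      have h := Real.rpow_add hn0 1 (-(γ+1))
      rw [Real.rpow_one] at h
      rw [← h]
      norm_num
    rw [this]
  -- identify the good event
  have hset : {ω | ∀ l, 1 ≤ (univ.filter fun i => Xi i ω = l).card} = (⋃ l, A l)ᶜ := by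
    ext ω
    simp only [Set.mem_setOf_eq, Set.mem_compl_iff, Set.mem_iUnion, not_exists, hA,
      Set.mem_iInter, Set.mem_preimage, Set.mem_compl_iff, Set.mem_singleton_iff,
      Finset.one_le_card, Finset.filter_nonempty_iff]
    constructor
    · rintro h l hl
      obtain ⟨i, -, hi⟩ := h l
      exact hl i hi
    · intro h l
      by_contra hcon
      push_neg at hcon
      exact h l fun i => hcon i (mem_univ i)
  rw [hset, prob_compl_eq_one_sub (MeasurableSet.iUnion hAm),
    ENNReal.toReal_sub_of_le prob_le_one (by simp), ENNReal.toReal_one]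
  have hpos : 0 ≤ (n:ℝ) ^ (-γ) := Real.rpow_nonneg hn0.le _
  linarith [hunion]
end
end
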